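/- Let A ⊆ B(G_μ) and B ⊆ B(G_ν) be von Neumann algebras with cyclic and separating unit vectors Λ_μ, Λ_ν defining faithful normal states μ, ν, let ω be a coupling of (A, μ) and (B, ν), and let E_ω : A → B be the associated map (defined from a cyclic representation of ω by compression to the closure of π_ω(1 ⊗ B′)Ω_ω). Then E_ω is the unique function F from A to B satisfying ω(a ⊗ b′) = ⟨Λ_ν, F(a) b′ Λ_ν⟩ for all a ∈ A and b′ ∈ B′; that is, ω(a ⊗ b′) = δ_ν(E_ω(a) ⊗ b′), where δ_ν is the diagonal coupling of ν with itself. -/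

import Mathlib

open scoped ComplexOrder

noncomputable section

noncomputable instance {H : Type} [NormedAddCommGroup H] [InnerProductSpace ℂ H]
    [CompleteSpace H] (A : VonNeumannAlgebra H) : Algebra ℂ ↥A :=
  inferInstanceAs (Algebra ℂ ↥A.toStarSubalgebra)

variable {Gμ Gν Hw : Type}
  [NormedAddCommGroup Gμ] [InnerProductSpace ℂ Gμ] [CompleteSpace Gμ]
  [NormedAddCommGroup Gν] [InnerProductSpace ℂ Gν] [CompleteSpace Gν]
  [NormedAddCommGroup Hw] [InnerProductSpace ℂ Hw] [CompleteSpace Hw]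

/-- A coupling of `(A, μ)` and `(B, ν)`: a state on the algebraic tensor product `A ⊙ B′`
(equivalently, a bilinear functional, positive on elements of the form `x* x`) whose
marginals are `μ` and `ν′`. -/
def IsCoupling (A : VonNeumannAlgebra Gμ) (B : VonNeumannAlgebra Gν) (Λμ : Gμ) (Λν : Gν)
    (ω : ↥A →ₗ[ℂ] ↥B.commutant →ₗ[ℂ] ℂ) : Prop :=
  (∀ (n : ℕ) (a : Fin n → ↥A) (b : Fin n → ↥B.commutant),
      0 ≤ ∑ i, ∑ j, ω (star (a i) * a j) (star (b i) * b j)) ∧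
  (∀ a : ↥A, ω a 1 = inner ℂ Λμ ((a : Gμ →L[ℂ] Gμ) Λμ)) ∧
  (∀ b' : ↥B.commutant, ω 1 b' = inner ℂ Λν ((b' : Gν →L[ℂ] Gν) Λν))

/-- The compression map `E_ω(a) = u_ν* ι* π_ω(a ⊗ 1) ι u_ν` is the unique
function `F : A → B` such that `ω(a ⊗ b′) = ⟨Λ_ν, F(a) b′ Λ_ν⟩ (= δ_ν(F(a) ⊗ b′))` for all
`a ∈ A` and `b′ ∈ B′`. -/
theorem compression_unique_characterization
    (A : VonNeumannAlgebra Gμ) (B : VonNeumannAlgebra Gν) (Λμ : Gμ) (Λν : Gν)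
    (hΛμunit : ‖Λμ‖ = 1) (hΛνunit : ‖Λν‖ = 1)
    (hΛμcyc : Dense (Set.range fun a : ↥A => (a : Gμ →L[ℂ] Gμ) Λμ))
    (hΛμsep : ∀ a : ↥A, (a : Gμ →L[ℂ] Gμ) Λμ = 0 → a = 0)
    (hΛνcyc : Dense (Set.range fun b : ↥B => (b : Gν →L[ℂ] Gν) Λν))
    (hΛνsep : ∀ b : ↥B, (b : Gν →L[ℂ] Gν) Λν = 0 → b = 0)
    (ω : ↥A →ₗ[ℂ] ↥B.commutant →ₗ[ℂ] ℂ) (hω : IsCoupling A B Λμ Λν ω)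
    -- a cyclic representation of `(A ⊙ B′, ω)`
    (π₁ : ↥A →⋆ₐ[ℂ] (Hw →L[ℂ] Hw)) (π₂ : ↥B.commutant →⋆ₐ[ℂ] (Hw →L[ℂ] Hw)) (Ωw : Hw)
    (hcomm : ∀ (a : ↥A) (b' : ↥B.commutant), Commute (π₁ a) (π₂ b'))
    (hcyc : Dense (Submodule.span ℂ
      (Set.range fun p : ↥A × ↥B.commutant => π₁ p.1 (π₂ p.2 Ωw)) : Set Hw))
    (hrep : ∀ (a : ↥A) (b' : ↥B.commutant), ω a b' = inner ℂ Ωw (π₁ a (π₂ b' Ωw)))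
    -- the unitary `u_ν : G_ν → H_ν ⊆ H_ω`
    (uν : Gν →L[ℂ] Hw) (huνiso : ∀ ξ : Gν, ‖uν ξ‖ = ‖ξ‖)
    (huν : ∀ b' : ↥B.commutant, uν ((b' : Gν →L[ℂ] Gν) Λν) = π₂ b' Ωw)
    (huνrange : Set.range uν = closure (Set.range fun b' : ↥B.commutant => π₂ b' Ωw)) :
    (∀ (a : ↥A) (b' : ↥B.commutant),
      ω a b' = inner ℂ Λν ((((ContinuousLinearMap.adjoint uν).comp ((π₁ a).comp uν)))
        ((b' : Gν →L[ℂ] Gν) Λν))) ∧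
    (∀ F : ↥A → ↥B,
      (∀ (a : ↥A) (b' : ↥B.commutant),
        ω a b' = inner ℂ Λν ((F a : Gν →L[ℂ] Gν) ((b' : Gν →L[ℂ] Gν) Λν))) →
      ∀ a : ↥A,
        (F a : Gν →L[ℂ] Gν) = (ContinuousLinearMap.adjoint uν).comp ((π₁ a).comp uν)) := by
  
  classical
  set S : Set Gν := Set.range fun b' : ↥B.commutant => (b' : Gν →L[ℂ] Gν) Λν with hS
  have hiso : Isometry uν := AddMonoidHomClass.isometry_of_norm uν huνiso
  have hΩ : uν Λν = Ωw := by
    have h1 := huν 1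
    simpa using h1
  -- density of B' Λν in Gν
  have hdense : Dense S := by
    have himg : uν '' S = Set.range fun b' : ↥B.commutant => π₂ b' Ωw := by
      ext x
      constructor
      · rintro ⟨y, ⟨b', rfl⟩, rfl⟩; exact ⟨b', (huν b').symm⟩
      · rintro ⟨b', rfl⟩; exact ⟨(b' : Gν →L[ℂ] Gν) Λν, ⟨b', rfl⟩, huν b'⟩
    have hclosed : IsClosed (uν '' closure S) :=
      hiso.isClosedEmbedding.isClosedMap _ isClosed_closure
    have h1 : uν '' closure S = closure (uν '' S) := by
      refine subset_antisymm ?_ ?_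
      · exact image_closure_subset_closure_image uν.continuous
      · exact closure_minimal (Set.image_mono subset_closure) hclosed
    have h2 : uν '' closure S = Set.range uν := by
      rw [h1, himg, huνrange]
    have h3 : uν '' closure S = uν '' Set.univ := by
      rw [h2, ← Set.image_univ]
    have h4 : closure S = Set.univ := Set.image_injective.mpr hiso.injective h3
    rw [dense_iff_closure_eq, h4]
  -- coercion facts
  have hstar : ∀ c' : ↥B.commutant,
      ((star c' : ↥B.commutant) : Gν →L[ℂ] Gν)
        = ContinuousLinearMap.adjoint (c' : Gν →L[ℂ] Gν) := by
    intro c'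
    rw [← ContinuousLinearMap.star_eq_adjoint]; rfl
  -- key computation for E
  have hE : ∀ (a : ↥A) (b' : ↥B.commutant),
      ω a b' = inner ℂ Λν ((((ContinuousLinearMap.adjoint uν).comp ((π₁ a).comp uν)))
        ((b' : Gν →L[ℂ] Gν) Λν)) := by
    intro a b'
    rw [hrep]
    simp only [ContinuousLinearMap.comp_apply]
    rw [ContinuousLinearMap.adjoint_inner_right, hΩ, huν]
  refine ⟨hE, ?_⟩
  intro F hF a
  -- for all c', b' the two sesquilinear forms agree, both being ω a (star c' * b')
  have hFkey : ∀ c' b' : ↥B.commutant,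
      (inner ℂ ((c' : Gν →L[ℂ] Gν) Λν)
        ((F a : Gν →L[ℂ] Gν) ((b' : Gν →L[ℂ] Gν) Λν)) : ℂ) = ω a (star c' * b') := by
    intro c' b'
    have hcm : ((F a : Gν →L[ℂ] Gν)) * ((star c' : ↥B.commutant) : Gν →L[ℂ] Gν)
        = ((star c' : ↥B.commutant) : Gν →L[ℂ] Gν) * (F a : Gν →L[ℂ] Gν) := by
      have hmem : ((star c' : ↥B.commutant) : Gν →L[ℂ] Gν) ∈ B.commutant := (star c').2
      exact (VonNeumannAlgebra.mem_commutant_iff.mp hmem (F a : Gν →L[ℂ] Gν) (F a).2)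
    have h1 : (inner ℂ ((c' : Gν →L[ℂ] Gν) Λν)
        ((F a : Gν →L[ℂ] Gν) ((b' : Gν →L[ℂ] Gν) Λν)) : ℂ)
        = inner ℂ Λν (((star c' : ↥B.commutant) : Gν →L[ℂ] Gν)
            ((F a : Gν →L[ℂ] Gν) ((b' : Gν →L[ℂ] Gν) Λν))) := by
      rw [hstar, ContinuousLinearMap.adjoint_inner_right]
    rw [h1]
    have h2 : ((star c' : ↥B.commutant) : Gν →L[ℂ] Gν)
          ((F a : Gν →L[ℂ] Gν) ((b' : Gν →L[ℂ] Gν) Λν))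
        = (F a : Gν →L[ℂ] Gν) (((star c' * b' : ↥B.commutant) : Gν →L[ℂ] Gν) Λν) := by
      have := congrFun (congrArg (fun T : Gν →L[ℂ] Gν => (T : Gν → Gν)) hcm)
        ((b' : Gν →L[ℂ] Gν) Λν)
      simpa [ContinuousLinearMap.mul_apply] using this.symm
    rw [h2, ← hF a (star c' * b')]
  have hEkey : ∀ c' b' : ↥B.commutant,
      (inner ℂ ((c' : Gν →L[ℂ] Gν) Λν)
        ((((ContinuousLinearMap.adjoint uν).comp ((π₁ a).comp uν)))
          ((b' : Gν →L[ℂ] Gν) Λν)) : ℂ) = ω a (star c' * b') := by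
    intro c' b'
    simp only [ContinuousLinearMap.comp_apply]
    rw [ContinuousLinearMap.adjoint_inner_right, huν, huν, hrep]
    have h3 : (inner ℂ (π₂ c' Ωw) (π₁ a (π₂ b' Ωw)) : ℂ)
        = inner ℂ Ωw (π₂ (star c') (π₁ a (π₂ b' Ωw))) := by
      rw [map_star, ContinuousLinearMap.star_eq_adjoint,
        ContinuousLinearMap.adjoint_inner_right]
    rw [h3]
    have h4 : π₂ (star c') (π₁ a (π₂ b' Ωw)) = π₁ a (π₂ (star c' * b') Ωw) := by
      have := congrFun (congrArg (fun T : Hw →L[ℂ] Hw => (T : Hw → Hw)) (hcomm a (star c')))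
        (π₂ b' Ωw)
      simp only [ContinuousLinearMap.mul_apply] at this
      rw [map_mul, ContinuousLinearMap.mul_apply, ← this]
    rw [h4]
  -- conclude equality of the operators on the dense set S
  have heqOn : Set.EqOn ((F a : Gν →L[ℂ] Gν) : Gν → Gν)
      (((ContinuousLinearMap.adjoint uν).comp ((π₁ a).comp uν)) : Gν → Gν) S := by
    rintro w ⟨b', rfl⟩
    set v : Gν := (F a : Gν →L[ℂ] Gν) ((b' : Gν →L[ℂ] Gν) Λν)
      - ((ContinuousLinearMap.adjoint uν).comp ((π₁ a).comp uν)) ((b' : Gν →L[ℂ] Gν) Λν)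
      with hv
    have hz : ∀ w : Gν, (inner ℂ w v : ℂ) = 0 := by
      have hcl : IsClosed {w : Gν | (inner ℂ w v : ℂ) = 0} :=
        isClosed_eq (Continuous.inner continuous_id continuous_const) continuous_const
      have hsub : S ⊆ {w : Gν | (inner ℂ w v : ℂ) = 0} := by
        rintro w ⟨c', rfl⟩
        simp only [Set.mem_setOf_eq, hv, inner_sub_right, hFkey c' b', hEkey c' b']
        ring
      intro w
      have hw : w ∈ closure S := by rw [hdense.closure_eq]; trivial
      exact closure_minimal hsub hcl hw
    have : v = 0 := by
      have := hz v
      rwa [inner_self_eq_zero] at this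
    have := sub_eq_zero.mp this
    simpa using this
  exact ContinuousLinearMap.coeFn_injective
    (Continuous.ext_on hdense (F a : Gν →L[ℂ] Gν).continuous
      ((ContinuousLinearMap.adjoint uν).comp ((π₁ a).comp uν)).continuous heqOn)
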